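/- Let ρ_A, ρ_B be density matrices on ℂ^n and ρ'_A, ρ'_B be density matrices on ℂ^m. Then, with ⊗ denoting the Kronecker product of matrices, C(ρ_A ⊗ ρ'_A, ρ_B ⊗ ρ'_B) ≥ C(ρ_A, ρ_B) · C(ρ'_A, ρ'_B). -/

import Mathlib

open Matrix BigOperators
open scoped ComplexOrder

/-- A density matrix: positive semidefinite with trace 1. -/
def IsDensityMatrix {d : Type*} [Fintype d] [DecidableEq d]
    (ρ : Matrix d d ℂ) : Prop :=
  ρ.PosSemidef ∧ ρ.trace = 1

/-- The compatibility `C(ρA, ρB)`: the supremum, over all finite families of density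
matrices `σ` and weight vectors `p`, `q` (nonnegative, summing to 1) with
`∑ i, p i • σ i = ρA` and `∑ i, q i • σ i = ρB`, of the Bhattacharyya overlap
`∑ i, √(p i * q i)`. -/
noncomputable def compat {d : Type*} [Fintype d] [DecidableEq d]
    (ρA ρB : Matrix d d ℂ) : ℝ :=
  sSup { c : ℝ | ∃ (m : ℕ) (σ : Fin m → Matrix d d ℂ) (p q : Fin m → ℝ),
    (∀ i, IsDensityMatrix (σ i)) ∧ (∀ i, 0 ≤ p i) ∧ (∀ i, 0 ≤ q i) ∧
    ∑ i, p i = 1 ∧ ∑ i, q i = 1 ∧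
    ∑ i, p i • σ i = ρA ∧ ∑ i, q i • σ i = ρB ∧
    c = ∑ i, Real.sqrt (p i * q i) }

open scoped Classical in
/-- The positive semidefinite square root of a positive semidefinite matrix
(junk value `0` on non-PSD matrices). -/
noncomputable def psdSqrt {d : Type*} [Fintype d] [DecidableEq d]
    (A : Matrix d d ℂ) : Matrix d d ℂ :=
  if h : A.PosSemidef then
    (h.1.eigenvectorUnitary : Matrix d d ℂ) * diagonal ((↑) ∘ (Real.sqrt ∘ h.1.eigenvalues)) *
      (star h.1.eigenvectorUnitary : Matrix d d ℂ)
  else 0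

/-- The fidelity `F(ρA, ρB) = Tr √(√ρA ρB √ρA)`. -/
noncomputable def fidelity {d : Type*} [Fintype d] [DecidableEq d]
    (ρA ρB : Matrix d d ℂ) : ℝ :=
  (psdSqrt (psdSqrt ρA * ρB * psdSqrt ρA)).trace.re

/-- The pure-state density matrix `|ψ⟩⟨ψ|` associated to a vector `ψ`. -/
def pureState {d : Type*} [Fintype d] [DecidableEq d] (ψ : d → ℂ) : Matrix d d ℂ :=
  Matrix.vecMulVec ψ (star ψ)

/-! ### Auxiliary lemmas -/

open Kronecker

/-- The compatibility set whose supremum is `compat`. -/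
def compatSet {d : Type*} [Fintype d] [DecidableEq d]
    (ρA ρB : Matrix d d ℂ) : Set ℝ :=
  { c : ℝ | ∃ (m : ℕ) (σ : Fin m → Matrix d d ℂ) (p q : Fin m → ℝ),
    (∀ i, IsDensityMatrix (σ i)) ∧ (∀ i, 0 ≤ p i) ∧ (∀ i, 0 ≤ q i) ∧
    ∑ i, p i = 1 ∧ ∑ i, q i = 1 ∧
    ∑ i, p i • σ i = ρA ∧ ∑ i, q i • σ i = ρB ∧
    c = ∑ i, Real.sqrt (p i * q i) }

lemma compat_eq_sSup_compatSet {d : Type*} [Fintype d] [DecidableEq d]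
    (ρA ρB : Matrix d d ℂ) : compat ρA ρB = sSup (compatSet ρA ρB) := rfl

lemma conjTranspose_kron {a b c d : Type*} [Fintype a] [Fintype b] [Fintype c] [Fintype d]
    (A : Matrix a b ℂ) (B : Matrix c d ℂ) :
    (A ⊗ₖ B)ᴴ = Aᴴ ⊗ₖ Bᴴ := by
  ext i j
  simp [conjTranspose_apply, kroneckerMap_apply, mul_comm]

lemma posSemidef_kron {a c : Type*} [Fintype a] [Fintype c] [DecidableEq a] [DecidableEq c]
    {A : Matrix a a ℂ} {B : Matrix c c ℂ} (hA : A.PosSemidef) (hB : B.PosSemidef) :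
    (A ⊗ₖ B).PosSemidef := by
  exact hA.kronecker hB

lemma isDensityMatrix_kron {a c : Type*} [Fintype a] [Fintype c] [DecidableEq a] [DecidableEq c]
    {A : Matrix a a ℂ} {B : Matrix c c ℂ}
    (hA : IsDensityMatrix A) (hB : IsDensityMatrix B) : IsDensityMatrix (A ⊗ₖ B) :=
  ⟨posSemidef_kron hA.1 hB.1, by rw [trace_kronecker, hA.2, hB.2, one_mul]⟩

lemma sum_kron_sum {a c ι κ : Type*} [Fintype a] [Fintype c] (s : Finset ι) (t : Finset κ)
    (A : ι → Matrix a a ℂ) (B : κ → Matrix c c ℂ) :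
    (∑ i ∈ s, A i) ⊗ₖ (∑ j ∈ t, B j) = ∑ i ∈ s, ∑ j ∈ t, A i ⊗ₖ B j := by
  ext ⟨i₁, i₂⟩ ⟨j₁, j₂⟩
  simp [kroneckerMap_apply, Matrix.sum_apply, Finset.sum_mul_sum]

lemma sSup_mul_sSup_le {S T U : Set ℝ} (hS : S.Nonempty) (hT : T.Nonempty)
    (hbT : BddAbove T) (hbU : BddAbove U)
    (hSnn : ∀ a ∈ S, 0 ≤ a) (hTnn : ∀ b ∈ T, 0 ≤ b)
    (h : ∀ a ∈ S, ∀ b ∈ T, a * b ∈ U) :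
    sSup S * sSup T ≤ sSup U := by
  obtain ⟨a₀, ha₀⟩ := hS
  obtain ⟨b₀, hb₀⟩ := hT
  have hUnn : (0:ℝ) ≤ sSup U := by
    have h1 : 0 ≤ a₀ * b₀ := mul_nonneg (hSnn _ ha₀) (hTnn _ hb₀)
    linarith [le_csSup hbU (h a₀ ha₀ b₀ hb₀)]
  have step1 : ∀ a ∈ S, a * sSup T ≤ sSup U := by
    intro a ha
    rcases eq_or_lt_of_le (hSnn a ha) with h0 | hpos
    · simp [← h0, hUnn]
    · have : sSup T ≤ sSup U / a := by
        refine csSup_le ⟨b₀, hb₀⟩ fun b hb => ?_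
        rw [le_div_iff₀ hpos, mul_comm]
        exact le_csSup hbU (h a ha b hb)
      calc a * sSup T ≤ a * (sSup U / a) :=
            mul_le_mul_of_nonneg_left this (le_of_lt hpos)
        _ = sSup U := by field_simp
  have hTs : 0 ≤ sSup T := le_trans (hTnn _ hb₀) (le_csSup hbT hb₀)
  rcases eq_or_lt_of_le hTs with h0 | hpos
  · simp [← h0, hUnn]
  · have : sSup S ≤ sSup U / sSup T := by
      refine csSup_le ⟨a₀, ha₀⟩ fun a ha => ?_
      rw [le_div_iff₀ hpos]
      exact step1 a ha
    calc sSup S * sSup T ≤ (sSup U / sSup T) * sSup T :=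
          mul_le_mul_of_nonneg_right this (le_of_lt hpos)
      _ = sSup U := by field_simp

lemma zero_mem_compatSet {d : Type*} [Fintype d] [DecidableEq d]
    {ρA ρB : Matrix d d ℂ} (hA : IsDensityMatrix ρA) (hB : IsDensityMatrix ρB) :
    (0:ℝ) ∈ compatSet ρA ρB := by
  refine ⟨2, ![ρA, ρB], ![1, 0], ![0, 1], ?_, ?_, ?_, ?_, ?_, ?_, ?_, ?_⟩
  · intro i; fin_cases i <;> simpa
  · intro i; fin_cases i <;> norm_num
  · intro i; fin_cases i <;> norm_num
  · simp [Fin.sum_univ_two]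
  · simp [Fin.sum_univ_two]
  · simp [Fin.sum_univ_two]
  · simp [Fin.sum_univ_two]
  · simp [Fin.sum_univ_two]

lemma compatSet_nonneg {d : Type*} [Fintype d] [DecidableEq d]
    {ρA ρB : Matrix d d ℂ} {c : ℝ} (hc : c ∈ compatSet ρA ρB) : 0 ≤ c := by
  obtain ⟨_, _, p, q, _, _, _, _, _, _, _, rfl⟩ := hc
  exact Finset.sum_nonneg fun i _ => Real.sqrt_nonneg _

lemma compatSet_le_one {d : Type*} [Fintype d] [DecidableEq d]
    {ρA ρB : Matrix d d ℂ} {c : ℝ} (hc : c ∈ compatSet ρA ρB) : c ≤ 1 := by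
  obtain ⟨mm, _, p, q, _, hp, hq, hps, hqs, _, _, rfl⟩ := hc
  have key : ∀ i : Fin mm, Real.sqrt (p i * q i) ≤ (p i + q i) / 2 := by
    intro i
    rw [Real.sqrt_mul (hp i)]
    nlinarith [sq_nonneg (Real.sqrt (p i) - Real.sqrt (q i)), Real.sq_sqrt (hp i),
      Real.sq_sqrt (hq i), Real.sqrt_nonneg (p i), Real.sqrt_nonneg (q i)]
  calc ∑ i, Real.sqrt (p i * q i) ≤ ∑ i, (p i + q i) / 2 :=
        Finset.sum_le_sum fun i _ => key i
    _ = 1 := by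
      rw [← Finset.sum_div, Finset.sum_add_distrib, hps, hqs]; norm_num

lemma bddAbove_compatSet {d : Type*} [Fintype d] [DecidableEq d]
    (ρA ρB : Matrix d d ℂ) : BddAbove (compatSet ρA ρB) :=
  ⟨1, fun _ hc => compatSet_le_one hc⟩

lemma mul_mem_compatSet_kron {n m : ℕ}
    {ρA ρB : Matrix (Fin n) (Fin n) ℂ} {ρA' ρB' : Matrix (Fin m) (Fin m) ℂ}
    {a b : ℝ} (ha : a ∈ compatSet ρA ρB) (hb : b ∈ compatSet ρA' ρB') :
    a * b ∈ compatSet (ρA ⊗ₖ ρA') (ρB ⊗ₖ ρB') := by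
  obtain ⟨m₁, σ, p, q, hσ, hp, hq, hps, hqs, hpA, hqB, rfl⟩ := ha
  obtain ⟨m₂, σ', p', q', hσ', hp', hq', hps', hqs', hpA', hqB', rfl⟩ := hb
  set e := finProdFinEquiv (m := m₁) (n := m₂)
  refine ⟨m₁ * m₂,
    fun k => σ (e.symm k).1 ⊗ₖ σ' (e.symm k).2,
    fun k => p (e.symm k).1 * p' (e.symm k).2,
    fun k => q (e.symm k).1 * q' (e.symm k).2,
    ?_, ?_, ?_, ?_, ?_, ?_, ?_, ?_⟩
  · intro k; exact isDensityMatrix_kron (hσ _) (hσ' _)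
  · intro k; exact mul_nonneg (hp _) (hp' _)
  · intro k; exact mul_nonneg (hq _) (hq' _)
  · rw [Equiv.sum_comp e.symm (fun x : Fin m₁ × Fin m₂ => p x.1 * p' x.2),
      Fintype.sum_prod_type, ← Finset.sum_mul_sum, hps, hps', one_mul]
  · rw [Equiv.sum_comp e.symm (fun x : Fin m₁ × Fin m₂ => q x.1 * q' x.2),
      Fintype.sum_prod_type, ← Finset.sum_mul_sum, hqs, hqs', one_mul]
  · rw [Equiv.sum_comp e.symm
        (fun x : Fin m₁ × Fin m₂ => (p x.1 * p' x.2) • (σ x.1 ⊗ₖ σ' x.2)),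
      Fintype.sum_prod_type, ← hpA, ← hpA', sum_kron_sum]
    refine Finset.sum_congr rfl fun i _ => Finset.sum_congr rfl fun j _ => ?_
    rw [smul_kronecker, kronecker_smul, smul_smul]
  · rw [Equiv.sum_comp e.symm
        (fun x : Fin m₁ × Fin m₂ => (q x.1 * q' x.2) • (σ x.1 ⊗ₖ σ' x.2)),
      Fintype.sum_prod_type, ← hqB, ← hqB', sum_kron_sum]
    refine Finset.sum_congr rfl fun i _ => Finset.sum_congr rfl fun j _ => ?_
    rw [smul_kronecker, kronecker_smul, smul_smul]
  · rw [Finset.sum_mul_sum,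
      Equiv.sum_comp e.symm
        (fun x : Fin m₁ × Fin m₂ =>
          Real.sqrt (p x.1 * p' x.2 * (q x.1 * q' x.2))),
      Fintype.sum_prod_type]
    refine Finset.sum_congr rfl fun i _ => Finset.sum_congr rfl fun j _ => ?_
    rw [← Real.sqrt_mul (mul_nonneg (hp i) (hq i))]
    ring_nf

open Kronecker in
/-- **P7** (multiplicativity). The compatibility of tensor (Kronecker) products
is at least the product of the compatibilities. -/
theorem compat_kronecker_ge {n m : ℕ}
    (ρA ρB : Matrix (Fin n) (Fin n) ℂ) (ρA' ρB' : Matrix (Fin m) (Fin m) ℂ)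
    (hA : IsDensityMatrix ρA) (hB : IsDensityMatrix ρB)
    (hA' : IsDensityMatrix ρA') (hB' : IsDensityMatrix ρB') :
    compat ρA ρB * compat ρA' ρB' ≤ compat (ρA ⊗ₖ ρA') (ρB ⊗ₖ ρB') := by
  rw [compat_eq_sSup_compatSet, compat_eq_sSup_compatSet, compat_eq_sSup_compatSet]
  exact sSup_mul_sSup_le ⟨0, zero_mem_compatSet hA hB⟩ ⟨0, zero_mem_compatSet hA' hB'⟩
    (bddAbove_compatSet _ _) (bddAbove_compatSet _ _)
    (fun _ => compatSet_nonneg) (fun _ => compatSet_nonneg)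
    (fun a ha b hb => mul_mem_compatSet_kron ha hb)
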